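/- Let q ≥ 3 be odd and I(B,H,E) the ECH index formula. For every m ≥ 1 and every i with 0 ≤ i ≤ (q−3)/2: I(m−1, 1, i + (q−1)/2) + 2 = I(0, 0, qm + i) and I(m, 0, i) + 2 = I(0, 1, q(m−1) + i + (q+1)/2). -/

import Mathlib

/-- The ECH index `I(b^B h^H e^E)` of the Reeb current `b^B h^H e^E` for the
perturbed `T(2,q)` contact form on `S³`.  Here `E = qm + r` with `0 ≤ r ≤ q−1`
(so `m = E/q` and `r = E%q` as natural numbers), and `⌊2r/q⌋` is realized by
natural-number division since `0 ≤ 2r/q`. -/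
def echI (q B H E : ℕ) : ℚ :=
  2 * E * H - H ^ 2 + (q + 2) * H + 2 * q * B ^ 2 + (q + 3) * B + 4 * E * B
    + 2 * q * H * B + (2 / q) * E ^ 2 + (q + 1) * ((E / q : ℕ) : ℚ)
    - (2 / q) * ((E % q : ℕ) : ℚ) ^ 2 + 2 * ((E % q : ℕ) : ℚ)
    + ((2 * (E % q) / q : ℕ) : ℚ) * (2 * ((E % q : ℕ) : ℚ) - q + 1)

/-- for `m ≥ 1` and `0 ≤ i ≤ (q−3)/2`,
`I(m−1,1,i+(q−1)/2) + 2 = I(0,0,qm+i)` and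
`I(m,0,i) + 2 = I(0,1,q(m−1)+i+(q+1)/2)`. -/
theorem stmt_8 (q : ℕ) (hq3 : 3 ≤ q) (hqodd : Odd q)
    (m i : ℕ) (hm : 1 ≤ m) (hi : i ≤ (q - 3) / 2) :
    echI q (m - 1) 1 (i + (q - 1) / 2) + 2 = echI q 0 0 (q * m + i) ∧
      echI q m 0 i + 2 = echI q 0 1 (q * (m - 1) + i + (q + 1) / 2) := by
  obtain ⟨t, ht⟩ := hqodd
  have hq : q = 2 * t + 1 := by omega
  subst hq
  have ht1 : 1 ≤ t := by omega
  have hi' : i + 1 ≤ t := by omega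
  have e1 : i + (2 * t + 1 - 1) / 2 = i + t := by omega
  have e2 : (2 * t + 1) * (m - 1) + i + (2 * t + 1 + 1) / 2
      = (2 * t + 1) * (m - 1) + (i + t + 1) := by omega
  rw [e1, e2]
  have hqpos : 0 < 2 * t + 1 := by omega
  have hqQ : ((2 * t : ℚ) + 1) ≠ 0 := by positivity
  -- div/mod facts
  have d1 : (i + t) / (2 * t + 1) = 0 := Nat.div_eq_of_lt (by omega)
  have m1 : (i + t) % (2 * t + 1) = i + t := Nat.mod_eq_of_lt (by omega)
  have d2 : ((2 * t + 1) * m + i) / (2 * t + 1) = m := by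
    rw [Nat.mul_add_div hqpos, Nat.div_eq_of_lt (by omega)]; omega
  have m2 : ((2 * t + 1) * m + i) % (2 * t + 1) = i := by
    rw [Nat.mul_add_mod, Nat.mod_eq_of_lt (by omega)]
  have d3 : 2 * i / (2 * t + 1) = 0 := Nat.div_eq_of_lt (by omega)
  have d4 : i / (2 * t + 1) = 0 := Nat.div_eq_of_lt (by omega)
  have m4 : i % (2 * t + 1) = i := Nat.mod_eq_of_lt (by omega)
  have d5 : ((2 * t + 1) * (m - 1) + (i + t + 1)) / (2 * t + 1) = m - 1 := by
    rw [Nat.mul_add_div hqpos, Nat.div_eq_of_lt (by omega)]; omega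
  have m5 : ((2 * t + 1) * (m - 1) + (i + t + 1)) % (2 * t + 1) = i + t + 1 := by
    rw [Nat.mul_add_mod, Nat.mod_eq_of_lt (by omega)]
  have d6 : 2 * (i + t + 1) / (2 * t + 1) = 1 :=
    Nat.div_eq_of_lt_le (by omega) (by omega)
  have hmQ : ((m - 1 : ℕ) : ℚ) = (m : ℚ) - 1 := by
    push_cast [Nat.cast_sub hm]; ring
  constructor
  · rcases Nat.eq_zero_or_pos i with hi0 | hipos
    · subst hi0
      have d7 : 2 * (0 + t) / (2 * t + 1) = 0 := Nat.div_eq_of_lt (by omega)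
      simp only [echI, d1, m1, d2, m2, d3, d7, hmQ]
      push_cast
      field_simp
      ring
    · have d7 : 2 * (i + t) / (2 * t + 1) = 1 :=
        Nat.div_eq_of_lt_le (by omega) (by omega)
      simp only [echI, d1, m1, d2, m2, d3, d7, hmQ]
      push_cast
      field_simp
      ring
  · simp only [echI, d4, m4, d3, d5, m5, d6, hmQ]
    push_cast
    simp only [hmQ]
    field_simp
    ring
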